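/- Let $k$ be a field, let $f_1, f_2 \in k((t))$, let $c \in k$, and let $F \in k[t_1^{\pm 1}, t_2^{\pm 1}]$ be a Laurent polynomial in two variables. Then $\mathrm{Res}_{t}\Big(\mathrm{Res}_{s}\Big(\Theta(f_1)\cdot f_2 \cdot \big(F(t+s,t)\, s^{-1} + c\, s^{-2}\big)\Big)\Big) \;=\; \mathrm{Res}_{t}\big(f_1 f_2 \cdot F(t,t)\big) \;+\; c\,\mathrm{Res}_{t}\big(f_2\, f_1'\big)$, where $f_1'$ is the formal derivative of $f_1$. (This is the residue formula for the diagonal residue of $f_i(t_i) f_j(t_j) \alpha$ with $\alpha = \frac{F(t_i,t_j)\,dt_i dt_j}{t_i-t_j} + \frac{c\, dt_i dt_j}{(t_i-t_j)^2}$, namely $\mathrm{res}\,\mathrm{res}_{i\to j} f_i f_j \alpha = \mathrm{res}(f_i f_j\, r'_{ij}(\alpha)) + c\,\mathrm{res}(f_j\, df_i)$.) -/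

import Mathlib

noncomputable section

/-- The outer variable `s` of the iterated Laurent series field `k((t))((s))`. -/
def sVar (k : Type*) [Field k] : LaurentSeries (LaurentSeries k) :=
  HahnSeries.single 1 1

/-- The inner variable `t` of `k((t))((s))`, embedded as a constant. -/
def tVar₂ (k : Type*) [Field k] : LaurentSeries (LaurentSeries k) :=
  HahnSeries.single 0 (HahnSeries.single 1 1)

/-- The variable `t` of `k((t))`. -/
def tVar (k : Type*) [Field k] : LaurentSeries k := HahnSeries.single 1 1

/-- Evaluation of a two-variable Laurent polynomial, given by its finitely supported
coefficient function `F : ℤ × ℤ →₀ k`, at a pair of elements of a field extension `L` of `k`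
(the exponents are integer powers). -/
def evalLP {k L : Type*} [Field k] [Field L] [Algebra k L]
    (F : (ℤ × ℤ) →₀ k) (x y : L) : L :=
  ∑ p ∈ F.support, algebraMap k L (F p) * x ^ p.1 * y ^ p.2

namespace DRPF

open HahnSeries Finset

variable {R : Type*} [Field R]

/-- A Laurent series is *good* if all its negatively-indexed coefficients vanish. -/
def Good (x : HahnSeries ℤ R) : Prop := ∀ n : ℤ, n < 0 → x.coeff n = 0

lemma good_mul {x y : HahnSeries ℤ R} (hx : Good x) (hy : Good y) : Good (x * y) := by
  intro n hn
  rw [HahnSeries.coeff_mul]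
  apply Finset.sum_eq_zero
  rintro ⟨i, j⟩ hij
  rw [Finset.mem_addAntidiagonal] at hij
  obtain ⟨hi, hj, hsum⟩ := hij
  by_cases h : i < 0
  · exact absurd (hx i h) hi
  by_cases h2 : j < 0
  · exact absurd (hy j h2) hj
  omega

lemma mul_coeff_zero' {x y : HahnSeries ℤ R} (hx : Good x) (hy : Good y) :
    (x * y).coeff 0 = x.coeff 0 * y.coeff 0 := by
  rw [HahnSeries.coeff_mul]
  refine (Finset.sum_subset (s₂ := {((0:ℤ), (0:ℤ))}) ?_ ?_).trans ?_
  · rintro ⟨i, j⟩ hij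
    rw [Finset.mem_addAntidiagonal] at hij
    obtain ⟨hi, hj, hsum⟩ := hij
    have h1 : ¬ i < 0 := fun h => hi (hx i h)
    have h2 : ¬ j < 0 := fun h => hj (hy j h)
    simp only [Finset.mem_singleton, Prod.mk.injEq]
    omega
  · rintro ⟨i, j⟩ hij hnot
    rw [Finset.mem_singleton, Prod.mk.injEq] at hij
    obtain ⟨rfl, rfl⟩ := hij
    rw [Finset.mem_addAntidiagonal] at hnot
    push_neg at hnot
    simp only [HahnSeries.mem_support, ne_eq, not_not] at hnot
    by_cases h : x.coeff 0 = 0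
    · rw [h, zero_mul]
    · have hy0 : y.coeff 0 = 0 := by
        by_contra hy0
        exact hnot h hy0 (by norm_num)
      rw [hy0]
      simp
  · simp

lemma mul_coeff_one' {x y : HahnSeries ℤ R} (hx : Good x) (hy : Good y) :
    (x * y).coeff 1 = x.coeff 0 * y.coeff 1 + x.coeff 1 * y.coeff 0 := by
  rw [HahnSeries.coeff_mul]
  refine (Finset.sum_subset (s₂ := {((0:ℤ), (1:ℤ)), ((1:ℤ), (0:ℤ))}) ?_ ?_).trans ?_
  · rintro ⟨i, j⟩ hij
    rw [Finset.mem_addAntidiagonal] at hij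
    obtain ⟨hi, hj, hsum⟩ := hij
    have h1 : ¬ i < 0 := fun h => hi (hx i h)
    have h2 : ¬ j < 0 := fun h => hj (hy j h)
    simp only [Finset.mem_insert, Finset.mem_singleton, Prod.mk.injEq]
    omega
  · rintro ⟨i, j⟩ hij hnot
    rw [Finset.mem_addAntidiagonal] at hnot
    push_neg at hnot
    simp only [HahnSeries.mem_support, ne_eq, not_not] at hnot
    by_cases h : x.coeff i = 0
    · rw [h, zero_mul]
    · simp only [Finset.mem_insert, Finset.mem_singleton, Prod.mk.injEq] at hij
      rcases hij with ⟨rfl, rfl⟩ | ⟨rfl, rfl⟩ <;>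
      · have hy0 := not_not.mp (fun hy0 => hnot h hy0 (by norm_num))
        rw [hy0]
        simp
  · rw [Finset.sum_insert (by decide), Finset.sum_singleton]

lemma order_eq_zero' {x : HahnSeries ℤ R} (hx : Good x) (h0 : x.coeff 0 ≠ 0) :
    x.order = 0 := by
  have hne : x ≠ 0 := HahnSeries.ne_zero_of_coeff_ne_zero h0
  refine le_antisymm (HahnSeries.order_le_of_coeff_ne_zero h0) ?_
  by_contra h
  push_neg at h
  exact hne (HahnSeries.coeff_order_eq_zero.mp (hx _ h))

lemma good_inv {x : HahnSeries ℤ R} (hx : Good x) (h0 : x.coeff 0 ≠ 0) : Good x⁻¹ := by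
  have hne : x ≠ 0 := HahnSeries.ne_zero_of_coeff_ne_zero h0
  have hinv : x⁻¹ ≠ 0 := inv_ne_zero hne
  have horder : x.order + x⁻¹.order = 0 := by
    rw [← HahnSeries.order_mul hne hinv, mul_inv_cancel₀ hne]
    simpa using HahnSeries.order_single (one_ne_zero (α := R))
  rw [order_eq_zero' hx h0, zero_add] at horder
  intro n hn
  exact HahnSeries.coeff_eq_zero_of_lt_order (by rw [horder]; exact hn)

lemma inv_coeff_zero' {x : HahnSeries ℤ R} (hx : Good x) (h0 : x.coeff 0 ≠ 0) :
    (x⁻¹).coeff 0 = (x.coeff 0)⁻¹ := by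
  have hne : x ≠ 0 := HahnSeries.ne_zero_of_coeff_ne_zero h0
  have h := mul_coeff_zero' hx (good_inv hx h0)
  rw [mul_inv_cancel₀ hne] at h
  have h1 : (1 : HahnSeries ℤ R).coeff 0 = 1 := by simp
  rw [h1] at h
  exact (inv_eq_of_mul_eq_one_right h.symm).symm

lemma inv_coeff_one' {x : HahnSeries ℤ R} (hx : Good x) (h0 : x.coeff 0 ≠ 0) :
    (x⁻¹).coeff 1 = -(x.coeff 1) * (x.coeff 0)⁻¹ * (x.coeff 0)⁻¹ := by
  have hne : x ≠ 0 := HahnSeries.ne_zero_of_coeff_ne_zero h0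
  have h := mul_coeff_one' hx (good_inv hx h0)
  rw [mul_inv_cancel₀ hne] at h
  have h1 : (1 : HahnSeries ℤ R).coeff 1 = 0 := by
    rw [HahnSeries.coeff_one, if_neg (by decide)]
  rw [h1, inv_coeff_zero' hx h0] at h
  apply mul_left_cancel₀ h0
  linear_combination (-1 : R) * h +
    (x.coeff 1 * (x.coeff 0)⁻¹) * mul_inv_cancel₀ h0

lemma pow_spec (x : HahnSeries ℤ R) (hx : Good x) (h0 : x.coeff 0 ≠ 0) (n : ℕ) :
    Good (x ^ n) ∧ (x ^ n).coeff 0 = (x.coeff 0) ^ (n : ℤ) ∧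
      (x ^ n).coeff 1 = (n : ℤ) • (x.coeff 1 * (x.coeff 0) ^ ((n : ℤ) - 1)) := by
  induction n with
  | zero =>
    refine ⟨?_, by simp, by simp [HahnSeries.coeff_one]⟩
    intro m hm
    rw [pow_zero, HahnSeries.coeff_one, if_neg (by omega)]
  | succ n ih =>
    obtain ⟨hg, h0', h1'⟩ := ih
    have ha : (x.coeff 0) ^ ((n:ℤ) - 1) * x.coeff 0 = (x.coeff 0) ^ (n:ℤ) := by
      rw [← zpow_add_one₀ h0, sub_add_cancel]
    have hb : (x.coeff 0) ^ (n:ℤ) * x.coeff 0 = (x.coeff 0) ^ ((n:ℤ) + 1) := by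
      rw [← zpow_add_one₀ h0]
    refine ⟨by rw [pow_succ]; exact good_mul hg hx, ?_, ?_⟩
    · rw [pow_succ, mul_coeff_zero' hg hx, h0', hb]
      push_cast
      ring_nf
    · rw [pow_succ, mul_coeff_one' hg hx, h0', h1', zsmul_eq_mul, zsmul_eq_mul]
      push_cast
      have he : ((n:ℕ):ℤ) + 1 - 1 = ((n:ℤ)) := by ring
      rw [he]
      linear_combination ((n:R) * x.coeff 1) * ha

lemma zpow_spec (x : HahnSeries ℤ R) (hx : Good x) (h0 : x.coeff 0 ≠ 0) (z : ℤ) :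
    Good (x ^ z) ∧ (x ^ z).coeff 0 = (x.coeff 0) ^ z ∧
      (x ^ z).coeff 1 = z • (x.coeff 1 * (x.coeff 0) ^ (z - 1)) := by
  rcases z with n | n
  · simpa [zpow_natCast] using pow_spec x hx h0 n
  · obtain ⟨hg, hy0, hy1⟩ := pow_spec x hx h0 (n + 1)
    have hyne : (x ^ (n+1)).coeff 0 ≠ 0 := by
      rw [hy0]; exact zpow_ne_zero _ h0
    rw [zpow_negSucc]
    refine ⟨good_inv hg hyne, ?_, ?_⟩
    · rw [inv_coeff_zero' hg hyne, hy0, ← zpow_neg]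
      congr 1
    · rw [inv_coeff_one' hg hyne, hy0, hy1, zsmul_eq_mul, zsmul_eq_mul]
      have hc1 : ((n:ℕ) + 1 : ℕ) = ((n:ℤ) + 1 : ℤ).toNat := by omega
      have hinv : ((x.coeff 0) ^ (((n+1:ℕ)):ℤ))⁻¹ = (x.coeff 0) ^ (-((n:ℤ)) - 1) := by
        rw [← zpow_neg]; congr 1; push_cast; ring
      rw [hinv]
      have hexp1 : (((n+1:ℕ)):ℤ) - 1 = (n : ℤ) := by push_cast; ring
      rw [hexp1]
      have hexp : (Int.negSucc n) - 1 = (-(n:ℤ) - 1) + (-(n:ℤ) - 1) + (n : ℤ) := by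
        rw [Int.negSucc_eq]; ring
      have hns : ((Int.negSucc n : ℤ) : R) = -((n:R) + 1) := by
        rw [Int.negSucc_eq]; push_cast; ring
      rw [hexp, hns]
      rw [zpow_add₀ h0, zpow_add₀ h0]
      push_cast
      ring

end DRPF

open DRPF HahnSeries in
/-- The residue formula for the diagonal residue of `f₁(t₁) f₂(t₂) α` where
`α = F(t₁,t₂) (t₁-t₂)^{-1} dt₁dt₂ + c (t₁-t₂)^{-2} dt₁dt₂`:
`Res_t Res_s (Θ(f₁) · f₂ · (F(t+s,t) s^{-1} + c s^{-2})) = Res_t (f₁ f₂ F(t,t)) + c Res_t (f₂ f₁')`.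
Here `Θ : k((t)) → k((t))((s))` is the Taylor substitution `t ↦ t + s`, specified by its
coefficients via generalized binomial coefficients, and `f₁'` is the formal derivative of
`f₁`, specified coefficientwise. -/
theorem diagonal_residue_pairing_formula
    {k : Type*} [Field k]
    (f₁ f₂ : LaurentSeries k) (c : k) (F : (ℤ × ℤ) →₀ k)
    (Θ : LaurentSeries k → LaurentSeries (LaurentSeries k))
    (hΘneg : ∀ (f : LaurentSeries k) (n : ℤ), n < 0 → (Θ f).coeff n = 0)
    (hΘ : ∀ (f : LaurentSeries k) (n : ℤ), 0 ≤ n → ∀ r : ℤ,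
      ((Θ f).coeff n).coeff r =
        ((Ring.choose (r + n) n.toNat : ℤ) : k) * f.coeff (r + n))
    (f₁' : LaurentSeries k)
    (hf₁' : ∀ n : ℤ, f₁'.coeff n = (n + 1) • f₁.coeff (n + 1)) :
    ((Θ f₁ * HahnSeries.single 0 f₂ *
        (evalLP F (tVar₂ k + sVar k) (tVar₂ k) * sVar k ^ (-1 : ℤ) +
          algebraMap k (LaurentSeries (LaurentSeries k)) c * sVar k ^ (-2 : ℤ))).coeff
        (-1)).coeff (-1) =
      (f₁ * f₂ * evalLP F (tVar k) (tVar k)).coeff (-1) + c * (f₂ * f₁').coeff (-1) := by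
  classical
  -- basic coefficient facts
  have ht : tVar k ≠ 0 := HahnSeries.single_ne_zero one_ne_zero
  have hTg : Good (tVar₂ k) := by
    intro n hn
    rw [tVar₂, HahnSeries.coeff_single, if_neg (by omega)]
  have hT0 : (tVar₂ k).coeff 0 = tVar k := by
    rw [tVar₂, tVar, HahnSeries.coeff_single_same]
  have hT1 : (tVar₂ k).coeff 1 = 0 := by
    rw [tVar₂, HahnSeries.coeff_single, if_neg (by omega)]
  have hSg : Good (sVar k) := by
    intro n hn
    rw [sVar, HahnSeries.coeff_single, if_neg (by omega)]
  have hxg : Good (tVar₂ k + sVar k) := by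
    intro n hn
    rw [HahnSeries.coeff_add, hTg n hn, hSg n hn, add_zero]
  have hx0 : (tVar₂ k + sVar k).coeff 0 = tVar k := by
    rw [HahnSeries.coeff_add, hT0, sVar, HahnSeries.coeff_single, if_neg (by omega), add_zero]
  have hx0ne : (tVar₂ k + sVar k).coeff 0 ≠ 0 := by rw [hx0]; exact ht
  have hT0ne : (tVar₂ k).coeff 0 ≠ 0 := by rw [hT0]; exact ht
  -- negative powers of s
  have hSne : sVar k ≠ 0 := by
    rw [sVar]; exact HahnSeries.single_ne_zero one_ne_zero
  have hzero1 : sVar k * sVar k ^ (-1 : ℤ) = 1 := by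
    have h := zpow_add₀ (G₀ := LaurentSeries (LaurentSeries k)) hSne (1 : ℤ) (-1 : ℤ)
    norm_num at h
    rw [zpow_neg_one]; exact h.symm
  have honem : HahnSeries.single (-1 : ℤ) (1 : LaurentSeries k) * sVar k = 1 := by
    rw [sVar, HahnSeries.single_mul_single]
    norm_num
  have hSm1 : sVar k ^ (-1 : ℤ) = HahnSeries.single (-1 : ℤ) (1 : LaurentSeries k) := by
    have h : (HahnSeries.single (-1 : ℤ) (1 : LaurentSeries k) * sVar k) * sVar k ^ (-1 : ℤ)
        = HahnSeries.single (-1 : ℤ) (1 : LaurentSeries k) * (sVar k * sVar k ^ (-1 : ℤ)) := by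
      ring
    rw [honem, hzero1] at h
    exact ((one_mul (M := LaurentSeries (LaurentSeries k)) _).symm.trans h).trans
      (mul_one (M := LaurentSeries (LaurentSeries k)) _)
  have hsq : sVar k ^ (2 : ℤ) = sVar k * sVar k := by
    have h := zpow_add₀ (G₀ := LaurentSeries (LaurentSeries k)) hSne (1 : ℤ) (1 : ℤ)
    norm_num at h
    exact h
  have hzero2 : sVar k ^ (2 : ℤ) * sVar k ^ (-2 : ℤ) = 1 := by
    have h := zpow_add₀ (G₀ := LaurentSeries (LaurentSeries k)) hSne (2 : ℤ) (-2 : ℤ)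
    norm_num at h
    exact h.symm
  have honem2 : HahnSeries.single (-2 : ℤ) (1 : LaurentSeries k) * (sVar k * sVar k) = 1 := by
    rw [sVar, ← mul_assoc (G := LaurentSeries (LaurentSeries k)),
      HahnSeries.single_mul_single, HahnSeries.single_mul_single]
    norm_num
  have hSm2 : sVar k ^ (-2 : ℤ) = HahnSeries.single (-2 : ℤ) (1 : LaurentSeries k) := by
    have h : (HahnSeries.single (-2 : ℤ) (1 : LaurentSeries k) * (sVar k * sVar k)) *
          sVar k ^ (-2 : ℤ)
        = HahnSeries.single (-2 : ℤ) (1 : LaurentSeries k) *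
          (sVar k ^ (2 : ℤ) * sVar k ^ (-2 : ℤ)) := by
      rw [hsq]; ring
    rw [honem2, hzero2] at h
    exact ((one_mul (M := LaurentSeries (LaurentSeries k)) _).symm.trans h).trans
      (mul_one (M := LaurentSeries (LaurentSeries k)) _)
  -- algebraMap facts
  have halgK : ∀ r : k, algebraMap k (LaurentSeries k) r = HahnSeries.single (0 : ℤ) r := by
    intro r
    simp [HahnSeries.algebraMap_apply', PowerSeries.algebraMap_apply,
      HahnSeries.ofPowerSeries_C, HahnSeries.C_apply]
  have halg_eq : ∀ r : k, algebraMap k (LaurentSeries (LaurentSeries k)) r =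
      HahnSeries.single (0 : ℤ) (HahnSeries.single (0 : ℤ) r) := by
    intro r
    simp [HahnSeries.algebraMap_apply', PowerSeries.algebraMap_apply,
      HahnSeries.ofPowerSeries_C, HahnSeries.C_apply]
  have halg_good : ∀ r : k, Good (algebraMap k (LaurentSeries (LaurentSeries k)) r) := by
    intro r n hn
    rw [halg_eq r, HahnSeries.coeff_single, if_neg (by omega)]
  have halg0 : ∀ r : k, (algebraMap k (LaurentSeries (LaurentSeries k)) r).coeff 0 =
      HahnSeries.single (0 : ℤ) r := by
    intro r
    rw [halg_eq r, HahnSeries.coeff_single_same]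
  have halg1 : ∀ r : k, (algebraMap k (LaurentSeries (LaurentSeries k)) r).coeff 1 = 0 := by
    intro r
    rw [halg_eq r, HahnSeries.coeff_single, if_neg (by omega)]
  -- the evalLP factor
  have hcoeff_sum : ∀ (n : ℤ) (g : ℤ × ℤ → LaurentSeries (LaurentSeries k)),
      (∑ p ∈ F.support, g p).coeff n = ∑ p ∈ F.support, (g p).coeff n := by
    intro n g
    exact map_sum (HahnSeries.coeff.addMonoidHom n) g F.support
  have hterm : ∀ p : ℤ × ℤ,
      Good (algebraMap k (LaurentSeries (LaurentSeries k)) (F p) *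
        (tVar₂ k + sVar k) ^ p.1 * tVar₂ k ^ p.2) ∧
      (algebraMap k (LaurentSeries (LaurentSeries k)) (F p) *
        (tVar₂ k + sVar k) ^ p.1 * tVar₂ k ^ p.2).coeff 0 =
        algebraMap k (LaurentSeries k) (F p) * tVar k ^ p.1 * tVar k ^ p.2 := by
    intro p
    obtain ⟨hg1, hc1, -⟩ := zpow_spec (tVar₂ k + sVar k) hxg hx0ne p.1
    obtain ⟨hg2, hc2, -⟩ := zpow_spec (tVar₂ k) hTg hT0ne p.2
    refine ⟨good_mul (good_mul (halg_good _) hg1) hg2, ?_⟩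
    rw [mul_coeff_zero' (good_mul (halg_good _) hg1) hg2,
      mul_coeff_zero' (halg_good _) hg1, hc1, hc2, hx0, hT0, halg0, halgK]
  have hEg : Good (evalLP F (tVar₂ k + sVar k) (tVar₂ k)) := by
    intro n hn
    rw [evalLP, hcoeff_sum]
    exact Finset.sum_eq_zero fun p _ => (hterm p).1 n hn
  have hE0 : (evalLP F (tVar₂ k + sVar k) (tVar₂ k)).coeff 0 = evalLP F (tVar k) (tVar k) := by
    rw [evalLP, hcoeff_sum, evalLP]
    exact Finset.sum_congr rfl fun p _ => (hterm p).2
  -- the Θ factor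
  have hXg : Good (Θ f₁) := fun n hn => hΘneg f₁ n hn
  have hX0 : (Θ f₁).coeff 0 = f₁ := by
    ext r
    rw [hΘ f₁ 0 le_rfl r]
    simp
  have hX1 : (Θ f₁).coeff 1 = f₁' := by
    ext r
    rw [hΘ f₁ 1 (by norm_num) r, hf₁' r, zsmul_eq_mul]
    norm_num [Ring.choose_one_right]
  -- the f₂ factor
  have hYg : Good (HahnSeries.single (0 : ℤ) f₂ : LaurentSeries (LaurentSeries k)) := by
    intro n hn
    rw [HahnSeries.coeff_single, if_neg (by omega)]
  have hY0 : (HahnSeries.single (0 : ℤ) f₂ : LaurentSeries (LaurentSeries k)).coeff 0 = f₂ :=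
    HahnSeries.coeff_single_same _ _
  have hY1 : (HahnSeries.single (0 : ℤ) f₂ : LaurentSeries (LaurentSeries k)).coeff 1 = 0 := by
    rw [HahnSeries.coeff_single, if_neg (by omega)]
  -- rearrange the product
  have key : Θ f₁ * HahnSeries.single 0 f₂ *
      (evalLP F (tVar₂ k + sVar k) (tVar₂ k) * sVar k ^ (-1 : ℤ) +
        algebraMap k (LaurentSeries (LaurentSeries k)) c * sVar k ^ (-2 : ℤ)) =
      (Θ f₁ * HahnSeries.single 0 f₂ * evalLP F (tVar₂ k + sVar k) (tVar₂ k)) *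
          HahnSeries.single (-1 : ℤ) (1 : LaurentSeries k) +
        (algebraMap k (LaurentSeries (LaurentSeries k)) c *
          (Θ f₁ * HahnSeries.single 0 f₂)) * HahnSeries.single (-2 : ℤ) (1 : LaurentSeries k) := by
    rw [hSm1, hSm2]
    ring
  rw [key, HahnSeries.coeff_add]
  have e1 : ((Θ f₁ * HahnSeries.single 0 f₂ * evalLP F (tVar₂ k + sVar k) (tVar₂ k)) *
      HahnSeries.single (-1 : ℤ) (1 : LaurentSeries k)).coeff (-1) =
      (Θ f₁ * HahnSeries.single 0 f₂ * evalLP F (tVar₂ k + sVar k) (tVar₂ k)).coeff 0 := by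
    have h := HahnSeries.coeff_mul_single_add
      (x := Θ f₁ * HahnSeries.single 0 f₂ * evalLP F (tVar₂ k + sVar k) (tVar₂ k))
      (r := (1 : LaurentSeries k)) (a := (0 : ℤ)) (b := (-1 : ℤ))
    rw [show ((0 : ℤ) + (-1)) = -1 by norm_num] at h
    rw [h]
    exact mul_one (M := LaurentSeries k) _
  have e2 : ((algebraMap k (LaurentSeries (LaurentSeries k)) c *
      (Θ f₁ * HahnSeries.single 0 f₂)) *
      HahnSeries.single (-2 : ℤ) (1 : LaurentSeries k)).coeff (-1) =
      (algebraMap k (LaurentSeries (LaurentSeries k)) c *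
        (Θ f₁ * HahnSeries.single 0 f₂)).coeff 1 := by
    have h := HahnSeries.coeff_mul_single_add
      (x := algebraMap k (LaurentSeries (LaurentSeries k)) c *
        (Θ f₁ * HahnSeries.single 0 f₂))
      (r := (1 : LaurentSeries k)) (a := (1 : ℤ)) (b := (-2 : ℤ))
    rw [show ((1 : ℤ) + (-2)) = -1 by norm_num] at h
    rw [h]
    exact mul_one (M := LaurentSeries k) _
  rw [e1, e2]
  rw [mul_coeff_zero' (good_mul hXg hYg) hEg, mul_coeff_zero' hXg hYg, hX0, hY0, hE0]
  rw [mul_coeff_one' (halg_good c) (good_mul hXg hYg), mul_coeff_one' hXg hYg,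
    mul_coeff_zero' hXg hYg, hX0, hX1, hY0, hY1, halg0, halg1]
  rw [HahnSeries.coeff_add]
  congr 1
  have hfix : HahnSeries.single (0 : ℤ) c * (f₁ * 0 + f₁' * f₂) + 0 * (f₁ * f₂) =
      HahnSeries.single (0 : ℤ) c * (f₂ * f₁') := by ring
  rw [hfix, HahnSeries.coeff_single_zero_mul]
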